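/- Let k ≥ 3 be an odd integer. Then the state obtained by applying V_k at each of k sites (each site holding two of the 2k qubits, paired per site) to the 2k-qubit cat state (|00⟩^{⊗k}+|11⟩^{⊗k})/√2 is inconsistent; equivalently, the amplitude (1/√2)(∏_{i=1}^k (V_k)_{y_i,0} + ∏_{i=1}^k (V_k)_{y_i,3}) vanishes whenever y ∈ {0,1,2,3}^k is a constant string, i.e., for each c ∈ {0,1,2,3}, (V_k)_{c,0}^k + (V_k)_{c,3}^k = 0. -/

import Mathlib

open Matrix

/-- The 4×4 complex matrix `V_k` from the paper, with `R_k = cos(π/k)`, `I_k = sin(π/k)`,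
`R_{2k} = cos(π/(2k))`:
`(1/√(R_k+1)) · [[1/√2, 0, √R_k, e^{iπ/k}/√2], [1/√2, 0, −√R_k·e^{−iπ/k}, e^{−iπ/k}/√2],`
`[√R_k, 0, e^{−iπ/(2k)}·I_k/(i·√2·R_{2k}), −√R_k], [0, √(R_k+1), 0, 0]]`,
rows and columns indexed by two-bit strings `00,01,10,11` (encoded as `0,1,2,3`). -/
noncomputable def VMat (k : ℕ) : Matrix (Fin 4) (Fin 4) ℂ :=
  (1 / (Real.sqrt (Real.cos (Real.pi / k) + 1) : ℂ)) •
    !![1 / (Real.sqrt 2 : ℂ), 0, (Real.sqrt (Real.cos (Real.pi / k)) : ℂ),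
          Complex.exp (Complex.I * ((Real.pi : ℂ) / (k : ℂ))) / (Real.sqrt 2 : ℂ);
        1 / (Real.sqrt 2 : ℂ), 0,
          -((Real.sqrt (Real.cos (Real.pi / k)) : ℂ) *
              Complex.exp (-(Complex.I * ((Real.pi : ℂ) / (k : ℂ))))),
          Complex.exp (-(Complex.I * ((Real.pi : ℂ) / (k : ℂ)))) / (Real.sqrt 2 : ℂ);
        (Real.sqrt (Real.cos (Real.pi / k)) : ℂ), 0,
          Complex.exp (-(Complex.I * ((Real.pi : ℂ) / (2 * (k : ℂ))))) *
              (Real.sin (Real.pi / k) : ℂ) /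
            (Complex.I * (Real.sqrt 2 : ℂ) * (Real.cos (Real.pi / (2 * k)) : ℂ)),
          -(Real.sqrt (Real.cos (Real.pi / k)) : ℂ);
        0, (Real.sqrt (Real.cos (Real.pi / k) + 1) : ℂ), 0, 0]

/-- For an odd integer `k ≥ 3`, applying `V_k` at each of `k` sites (each holding two of the
`2k` qubits) to the cat state `(|00⟩^{⊗k}+|11⟩^{⊗k})/√2` yields an inconsistent state:
`(V_k)_{c,00}^k + (V_k)_{c,11}^k = 0` for every two-bit string `c`, so the amplitude
`(1/√2)(∏ᵢ (V_k)_{yᵢ,00} + ∏ᵢ (V_k)_{yᵢ,11})` vanishes on every constant string `y`. -/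
theorem VMat_cat_inconsistent (k : ℕ) (hk : 3 ≤ k) (hko : Odd k) :
    (∀ c : Fin 4, VMat k c 0 ^ k + VMat k c 3 ^ k = 0) ∧
      ∀ y : Fin k → Fin 4, (∃ c : Fin 4, ∀ i, y i = c) →
        (1 / (Real.sqrt 2 : ℂ)) * ((∏ i, VMat k (y i) 0) + ∏ i, VMat k (y i) 3) = 0 := by

  have hk0 : (k : ℂ) ≠ 0 := by
    have : 0 < k := by omega
    exact_mod_cast this.ne'
  have hexp : Complex.exp (Complex.I * ((Real.pi : ℂ) / (k : ℂ))) ^ k = -1 := by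
    rw [← Complex.exp_nat_mul]
    have h : (k : ℂ) * (Complex.I * ((Real.pi : ℂ) / (k : ℂ))) = (Real.pi : ℂ) * Complex.I := by
      field_simp
    rw [h, Complex.exp_pi_mul_I]
  have hexp' : Complex.exp (-(Complex.I * ((Real.pi : ℂ) / (k : ℂ)))) ^ k = -1 := by
    rw [Complex.exp_neg, inv_pow, hexp]
    norm_num
  have hneg : (-1 : ℂ) ^ k = -1 := Odd.neg_one_pow hko
  have part1 : ∀ c : Fin 4, VMat k c 0 ^ k + VMat k c 3 ^ k = 0 := by
    intro c
    have hk0' : k ≠ 0 := by omega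
    fin_cases c <;>
      simp only [VMat, Matrix.smul_apply, Matrix.cons_val', Matrix.cons_val_zero, Fin.isValue,
        Matrix.cons_val_one, Matrix.head_cons, Matrix.empty_val', Matrix.cons_val_fin_one,
        Fin.mk_zero, Fin.mk_one, Matrix.cons_val_three, Matrix.cons_val_two, Matrix.tail_cons,
        Matrix.head_fin_const, smul_eq_mul, Matrix.of_apply, show ((⟨3, by omega⟩ : Fin 4) = 3) from rfl,
        show ((⟨2, by omega⟩ : Fin 4) = 2) from rfl]
    · simp only [mul_pow, div_pow, hexp]
      ring
    · simp only [mul_pow, div_pow, hexp']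
      ring
    · simp only [mul_pow, neg_pow, hneg]
      ring
    · simp [zero_pow hk0']
  refine ⟨part1, ?_⟩
  rintro y ⟨c, hc⟩
  simp_rw [hc]
  rw [Finset.prod_const, Finset.prod_const, Finset.card_univ, Fintype.card_fin, part1 c,
    mul_zero]
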